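/- Let x_1, ..., x_n ∈ ℝ^p, let F ⊆ {1,...,n} with |F| = m ≥ 3, let 0 ≤ ε and let w_{ij} be symmetric nonnegative affinities with w_{ij} = 1 whenever i, j ∈ F with i ≠ j, and 0 ≤ w_{ij} ≤ ε whenever not both i, j lie in F. Let γ ≥ 0, set E = Σ_{i=1}^n ‖x_i − x̄‖² with x̄ the mean of the data, and let u = (u_1, ..., u_n) be a configuration with all u_i distinct and ‖u_i − x_i‖ ≤ √E for all i. Then there exist an index j ∈ F and a unit vector v ∈ ℝ^p such that the one-sided directional derivative of the convex clustering energy E_γ at u, with respect to moving u_j in direction v, is at most 2√E − γ(m/2 − ε n). -/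

import Mathlib

open Finset
open scoped Topology

/-- The convex clustering energy
`E_γ(u) = ∑ᵢ ‖xᵢ − uᵢ‖² + γ ∑_{i<j} w i j ‖uᵢ − uⱼ‖`. -/
noncomputable def clusterEnergy {p n : ℕ} (x : Fin n → EuclideanSpace ℝ (Fin p))
    (w : Fin n → Fin n → ℝ) (γ : ℝ) (u : Fin n → EuclideanSpace ℝ (Fin p)) : ℝ :=
  ∑ i, ‖x i - u i‖ ^ 2 +
    γ * ∑ i, ∑ j ∈ univ.filter (fun j => i < j), w i j * ‖u i - u j‖

open scoped RealInnerProductSpace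

section AuxLemmasForDescent

variable {E : Type*} [NormedAddCommGroup E] [InnerProductSpace ℝ E]

lemma lemB (a v : E) (ha : a ≠ 0) :
    HasDerivAt (fun t : ℝ => ‖a + t • v‖) (⟪a, v⟫ / ‖a‖) 0 := by
  have hfun : (fun t : ℝ => ‖a + t • v‖)
      = fun t : ℝ => Real.sqrt (‖a‖ ^ 2 + 2 * ⟪a, v⟫ * t + ‖v‖ ^ 2 * t ^ 2) := by
    funext t
    rw [← Real.sqrt_sq (norm_nonneg (a + t • v))]
    congr 1
    rw [norm_add_sq_real, real_inner_smul_right, norm_smul]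
    simp [mul_pow, sq_abs]
    ring
  have hg : HasDerivAt (fun t : ℝ => ‖a‖ ^ 2 + 2 * ⟪a, v⟫ * t + ‖v‖ ^ 2 * t ^ 2)
      (2 * ⟪a, v⟫) 0 := by
    have h1 : HasDerivAt (fun t : ℝ => t) 1 (0:ℝ) := hasDerivAt_id 0
    have h2 : HasDerivAt (fun t : ℝ => t ^ 2) (2 * (0:ℝ) ^ 1) 0 := hasDerivAt_pow 2 0
    have := ((hasDerivAt_const (0:ℝ) (‖a‖^2)).fun_add ((h1.const_mul (2 * ⟪a, v⟫)))).fun_add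
      (h2.const_mul (‖v‖^2))
    refine this.congr_deriv ?_
    ring
  have hne : (‖a‖ ^ 2 + 2 * ⟪a, v⟫ * (0:ℝ) + ‖v‖ ^ 2 * (0:ℝ) ^ 2) ≠ 0 := by
    have h0 : ‖a‖ ^ 2 + 2 * ⟪a, v⟫ * (0:ℝ) + ‖v‖ ^ 2 * (0:ℝ) ^ 2 = ‖a‖ ^ 2 := by ring
    rw [h0]
    exact pow_ne_zero 2 (norm_ne_zero_iff.2 ha)
  rw [hfun]
  have := hg.sqrt hne
  convert this using 1
  have h0 : ‖a‖ ^ 2 + 2 * ⟪a, v⟫ * (0:ℝ) + ‖v‖ ^ 2 * (0:ℝ) ^ 2 = ‖a‖ ^ 2 := by ring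
  rw [h0, Real.sqrt_sq (norm_nonneg a)]
  have : 0 < ‖a‖ := norm_pos_iff.2 ha
  field_simp

lemma lemQ (c v : E) :
    HasDerivAt (fun t : ℝ => ‖c - t • v‖ ^ 2) (-(2 * ⟪c, v⟫)) 0 := by
  have hfun : (fun t : ℝ => ‖c - t • v‖ ^ 2)
      = fun t : ℝ => ‖c‖ ^ 2 - 2 * ⟪c, v⟫ * t + ‖v‖ ^ 2 * t ^ 2 := by
    funext t
    rw [norm_sub_sq_real, real_inner_smul_right, norm_smul]
    simp [mul_pow, sq_abs]
    ring
  rw [hfun]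
  have h1 : HasDerivAt (fun t : ℝ => t) 1 (0:ℝ) := hasDerivAt_id 0
  have h2 : HasDerivAt (fun t : ℝ => t ^ 2) (2 * (0:ℝ) ^ 1) 0 := hasDerivAt_pow 2 0
  have := ((hasDerivAt_const (0:ℝ) (‖c‖^2)).fun_sub ((h1.const_mul (2 * ⟪c, v⟫)))).fun_add
    (h2.const_mul (‖v‖^2))
  refine this.congr_deriv ?_
  ring

-- real inequality core
example (d r s : ℝ) (hr : 0 < r) (hs : 0 < s) (hrd : r ≤ d) (hsd : s ≤ d) (htri : d ≤ r + s) :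
    2*d*r*s ≤ s*(d^2+r^2-s^2) + r*(d^2+s^2-r^2) := by
  nlinarith [mul_nonneg (mul_nonneg (sub_nonneg.2 hrd) (sub_nonneg.2 hsd)) (add_pos hr hs).le,
    mul_nonneg (sub_nonneg.2 htri) (sq_nonneg (r - s)),
    mul_nonneg (mul_nonneg (sub_nonneg.2 hrd) hs.le) hs.le,
    mul_nonneg (mul_nonneg (sub_nonneg.2 hsd) hr.le) hr.le,
    sq_nonneg (r - s), mul_pos hr hs]


lemma lemA (a b c : E) (hab : a ≠ b) (hac : a ≠ c) (hbc : b ≠ c)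
    (h1 : ‖c - a‖ ≤ ‖b - a‖) (h2 : ‖c - b‖ ≤ ‖b - a‖) :
    1 ≤ ⟪‖c - a‖⁻¹ • (c - a), ‖b - a‖⁻¹ • (b - a)⟫ +
        ⟪‖c - b‖⁻¹ • (c - b), ‖a - b‖⁻¹ • (a - b)⟫ := by
  set d := ‖b - a‖ with hd
  set r := ‖c - a‖ with hr
  set s := ‖c - b‖ with hs
  have hdpos : 0 < d := by rw [hd]; exact norm_pos_iff.2 (sub_ne_zero.2 (Ne.symm hab))
  have hrpos : 0 < r := by rw [hr]; exact norm_pos_iff.2 (sub_ne_zero.2 (Ne.symm hac))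
  have hspos : 0 < s := by rw [hs]; exact norm_pos_iff.2 (sub_ne_zero.2 (Ne.symm hbc))
  have htri : d ≤ r + s := by
    rw [hd, hr, hs]
    calc ‖b - a‖ = ‖(c - a) - (c - b)‖ := by congr 1; abel
      _ ≤ ‖c - a‖ + ‖c - b‖ := norm_sub_le _ _
  -- inner products via law of cosines
  have e1 : 2 * ⟪c - a, b - a⟫ = r^2 + d^2 - s^2 := by
    have : ‖(c - a) - (b - a)‖^2 = ‖c - a‖^2 - 2*⟪c - a, b - a⟫ + ‖b - a‖^2 :=
      norm_sub_sq_real _ _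
    have hcb : (c - a) - (b - a) = c - b := by abel
    rw [hcb] at this
    rw [← hd, ← hr, ← hs] at this
    linarith
  have e2 : 2 * ⟪c - b, a - b⟫ = s^2 + d^2 - r^2 := by
    have : ‖(c - b) - (a - b)‖^2 = ‖c - b‖^2 - 2*⟪c - b, a - b⟫ + ‖a - b‖^2 :=
      norm_sub_sq_real _ _
    have hca : (c - b) - (a - b) = c - a := by abel
    have hba : ‖a - b‖ = ‖b - a‖ := norm_sub_rev _ _
    rw [hca, hba] at this
    rw [← hd, ← hr, ← hs] at this
    linarith
  have hba : ‖a - b‖ = d := by rw [hd]; exact norm_sub_rev _ _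
  rw [real_inner_smul_left, real_inner_smul_right, real_inner_smul_left, real_inner_smul_right,
    hba]
  have key : 2*d*r*s ≤ s*(d^2+r^2-s^2) + r*(d^2+s^2-r^2) := by
    nlinarith [mul_nonneg (mul_nonneg (sub_nonneg.2 h1) (sub_nonneg.2 h2)) (add_pos hrpos hspos).le,
      mul_nonneg (sub_nonneg.2 htri) (sq_nonneg (r - s)),
      mul_nonneg (mul_nonneg (sub_nonneg.2 h1) hspos.le) hspos.le,
      mul_nonneg (mul_nonneg (sub_nonneg.2 h2) hrpos.le) hrpos.le,
      sq_nonneg (r - s), mul_pos hrpos hspos]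
  have f1 : ⟪c - a, b - a⟫ = (r^2+d^2-s^2)/2 := by linarith
  have f2 : ⟪c - b, a - b⟫ = (s^2+d^2-r^2)/2 := by linarith
  rw [f1, f2, ← sub_nonneg]
  have hexp : r⁻¹ * (d⁻¹ * ((r^2+d^2-s^2)/2)) + s⁻¹ * (d⁻¹ * ((s^2+d^2-r^2)/2)) - 1
      = (s*(d^2+r^2-s^2) + r*(d^2+s^2-r^2) - 2*d*r*s) / (2*d*r*s) := by
    field_simp
    ring
  rw [hexp]
  apply div_nonneg (by linarith) (by positivity)

lemma sum_pairs {n : ℕ} (j : Fin n) (c : Fin n → ℝ) :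
    (∑ i, ∑ j' ∈ univ.filter (fun j' => i < j'),
      (if i = j then c j' else if j' = j then c i else 0)) = ∑ i ∈ univ.erase j, c i := by
  classical
  rw [← Finset.sum_erase_add _ _ (mem_univ j)]
  have h1 : ∑ j' ∈ univ.filter (fun j' => j < j'),
      (if j = j then c j' else if j' = j then c j else 0) = ∑ j' ∈ univ.filter (fun j' => j < j'), c j' := by
    apply Finset.sum_congr rfl; intro i hi; simp
  have h2 : ∀ i ∈ univ.erase j, (∑ j' ∈ univ.filter (fun j' => i < j'),
      (if i = j then c j' else if j' = j then c i else 0)) = if i < j then c i else 0 := by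
    intro i hi
    have hij : i ≠ j := (mem_erase.1 hi).1
    rw [Finset.sum_congr rfl (fun j' _ => if_neg hij)]
    rw [Finset.sum_ite_eq' _ j (fun _ => c i)]
    simp [Finset.mem_filter]
  rw [Finset.sum_congr rfl h2, h1]
  rw [Finset.sum_ite, Finset.sum_const, smul_zero, add_zero]
  have hset : univ.filter (fun i => j < i) = (univ.erase j).filter (fun i => ¬ i < j) := by
    ext i
    simp only [mem_filter, mem_erase, mem_univ, true_and, and_true, not_lt]
    constructor
    · intro h; exact ⟨(ne_of_gt h), h.le⟩
    · rintro ⟨hne, hle⟩; exact lt_of_le_of_ne hle (fun e => hne e.symm)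
  rw [hset]
  exact Finset.sum_filter_add_sum_filter_not (univ.erase j) (fun i => i < j) c

lemma hasDerivAt_cluster {p n : ℕ} (x : Fin n → EuclideanSpace ℝ (Fin p))
    (w : Fin n → Fin n → ℝ) (hwsym : ∀ i j, w i j = w j i) (γ : ℝ)
    (u : Fin n → EuclideanSpace ℝ (Fin p)) (hu : Function.Injective u)
    (j : Fin n) (v : EuclideanSpace ℝ (Fin p)) :
    HasDerivAt (fun t : ℝ => clusterEnergy x w γ (Function.update u j (u j + t • v)))
      (2 * ⟪u j - x j, v⟫ +
        γ * ∑ i ∈ univ.erase j, w j i * (⟪u j - u i, v⟫ / ‖u j - u i‖)) 0 := by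
  classical
  set c : Fin n → ℝ := fun i => w j i * (⟪u j - u i, v⟫ / ‖u j - u i‖) with hc
  have hquad : HasDerivAt
      (fun t : ℝ => ∑ i, ‖x i - Function.update u j (u j + t • v) i‖ ^ 2)
      (∑ i : Fin n, if i = j then 2 * ⟪u j - x j, v⟫ else 0) 0 := by
    apply HasDerivAt.fun_sum
    intro i _
    by_cases hij : i = j
    · subst hij
      rw [if_pos rfl]
      have hfun : (fun t : ℝ => ‖x i - Function.update u i (u i + t • v) i‖ ^ 2)
          = fun t : ℝ => ‖(x i - u i) - t • v‖ ^ 2 := by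
        funext t
        simp only [Function.update_self]
        congr 2
        abel
      rw [hfun]
      have h := lemQ (x i - u i) v
      refine h.congr_deriv ?_
      rw [show u i - x i = -(x i - u i) by abel, inner_neg_left]
      ring
    · have hfun : (fun t : ℝ => ‖x i - Function.update u j (u j + t • v) i‖ ^ 2)
          = fun _ : ℝ => ‖x i - u i‖ ^ 2 := by
        funext t
        rw [Function.update_of_ne hij]
      rw [hfun, if_neg hij]
      exact hasDerivAt_const 0 _
  have hpair : HasDerivAt
      (fun t : ℝ => ∑ i, ∑ j' ∈ univ.filter (fun j' => i < j'),
        w i j' * ‖Function.update u j (u j + t • v) i - Function.update u j (u j + t • v) j'‖)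
      (∑ i, ∑ j' ∈ univ.filter (fun j' => i < j'),
        (if i = j then c j' else if j' = j then c i else 0)) 0 := by
    apply HasDerivAt.fun_sum
    intro i _
    apply HasDerivAt.fun_sum
    intro j' hj'
    have hij' : i < j' := (mem_filter.1 hj').2
    by_cases h1 : i = j
    · subst h1
      have hj'j : j' ≠ i := hij'.ne'
      rw [if_pos rfl]
      have hne : u i - u j' ≠ 0 := sub_ne_zero.2 (fun e => hj'j (hu e.symm))
      have hfun : (fun t : ℝ =>
          w i j' * ‖Function.update u i (u i + t • v) i - Function.update u i (u i + t • v) j'‖)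
          = fun t : ℝ => w i j' * ‖(u i - u j') + t • v‖ := by
        funext t
        rw [Function.update_self, Function.update_of_ne hj'j]
        congr 2
        abel
      rw [hfun]
      have h := (lemB (u i - u j') v hne).const_mul (w i j')
      convert h using 1
    · by_cases h2 : j' = j
      · subst h2
        rw [if_neg h1, if_pos rfl]
        have hne : u j' - u i ≠ 0 := sub_ne_zero.2 (fun e => h1 (hu e.symm))
        have hfun : (fun t : ℝ =>
            w i j' * ‖Function.update u j' (u j' + t • v) i - Function.update u j' (u j' + t • v) j'‖)
            = fun t : ℝ => w i j' * ‖(u j' - u i) + t • v‖ := by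
          funext t
          rw [Function.update_of_ne h1, Function.update_self]
          rw [show u i - (u j' + t • v) = -((u j' - u i) + t • v) by abel, norm_neg]
        rw [hfun]
        have h := (lemB (u j' - u i) v hne).const_mul (w i j')
        refine h.congr_deriv ?_
        simp only [hc]
        rw [hwsym j' i]
      · rw [if_neg h1, if_neg h2]
        have hfun : (fun t : ℝ =>
            w i j' * ‖Function.update u j (u j + t • v) i - Function.update u j (u j + t • v) j'‖)
            = fun _ : ℝ => w i j' * ‖u i - u j'‖ := by
          funext t
          rw [Function.update_of_ne h1, Function.update_of_ne h2]
        rw [hfun]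
        exact hasDerivAt_const 0 _
  have htotal := hquad.add (hpair.const_mul γ)
  have heq : (∑ i : Fin n, if i = j then 2 * ⟪u j - x j, v⟫ else 0)
      + γ * (∑ i, ∑ j' ∈ univ.filter (fun j' => i < j'),
        (if i = j then c j' else if j' = j then c i else 0))
      = 2 * ⟪u j - x j, v⟫ + γ * ∑ i ∈ univ.erase j, c i := by
    rw [sum_pairs j c, Finset.sum_ite_eq' univ j (fun _ => 2 * ⟪u j - x j, v⟫), if_pos (mem_univ j)]
  simp only [clusterEnergy]
  rw [← heq]
  exact htotal

end AuxLemmasForDescent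

/-- If the affinities are `1` within a folder `F` of size `m ≥ 3` and at most `ε`
outside, then for any configuration `u` of distinct centroids with
`‖uᵢ − xᵢ‖ ≤ √E` for all `i`, there is an index `j ∈ F` and a unit vector `v` such
that the one-sided directional derivative of the convex clustering energy at `u`,
with respect to moving `u j` in direction `v`, is at most `2√E − γ(m/2 − εn)`. -/
theorem descent_direction_within_folder {p n : ℕ}
    (x : Fin n → EuclideanSpace ℝ (Fin p))
    (F : Finset (Fin n)) (m : ℕ) (hmF : F.card = m) (hm : 3 ≤ m)
    (ε : ℝ) (hε : 0 ≤ ε)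
    (w : Fin n → Fin n → ℝ) (hw0 : ∀ i j, 0 ≤ w i j) (hwsym : ∀ i j, w i j = w j i)
    (hwF : ∀ i ∈ F, ∀ j ∈ F, i ≠ j → w i j = 1)
    (hwout : ∀ i j, ¬(i ∈ F ∧ j ∈ F) → w i j ≤ ε)
    (γ : ℝ) (hγ : 0 ≤ γ)
    (u : Fin n → EuclideanSpace ℝ (Fin p)) (hu : Function.Injective u)
    (hubd : ∀ i, ‖u i - x i‖ ≤ Real.sqrt (∑ i, ‖x i - (n : ℝ)⁻¹ • ∑ k, x k‖ ^ 2)) :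
    ∃ j ∈ F, ∃ v : EuclideanSpace ℝ (Fin p), ‖v‖ = 1 ∧
      ∃ D : ℝ,
        Filter.Tendsto
          (fun t : ℝ =>
            (clusterEnergy x w γ (Function.update u j (u j + t • v)) -
              clusterEnergy x w γ u) / t)
          (𝓝[>] (0 : ℝ)) (𝓝 D) ∧
        D ≤ 2 * Real.sqrt (∑ i, ‖x i - (n : ℝ)⁻¹ • ∑ k, x k‖ ^ 2) -
              γ * ((m : ℝ) / 2 - ε * n) := by
  classical
  set R := Real.sqrt (∑ i, ‖x i - (n : ℝ)⁻¹ • ∑ k, x k‖ ^ 2) with hR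
  -- the key step, given a good pair (j, k)
  have key : ∀ j k : Fin n, j ∈ F → j ≠ k →
      ((m : ℝ)/2 ≤ ∑ i ∈ F.erase j,
        ⟪‖u i - u j‖⁻¹ • (u i - u j), ‖u k - u j‖⁻¹ • (u k - u j)⟫) →
      (∃ j ∈ F, ∃ v : EuclideanSpace ℝ (Fin p), ‖v‖ = 1 ∧
        ∃ D : ℝ,
          Filter.Tendsto
            (fun t : ℝ =>
              (clusterEnergy x w γ (Function.update u j (u j + t • v)) -
                clusterEnergy x w γ u) / t)
            (𝓝[>] (0 : ℝ)) (𝓝 D) ∧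
          D ≤ 2 * R - γ * ((m : ℝ) / 2 - ε * n)) := by
    intro j k hjF hjk H
    have hukj : u k - u j ≠ 0 := sub_ne_zero.2 (hu.ne (Ne.symm hjk))
    set v := ‖u k - u j‖⁻¹ • (u k - u j) with hv
    have hvnorm : ‖v‖ = 1 := norm_smul_inv_norm hukj
    refine ⟨j, hjF, v, hvnorm, ?_⟩
    set D := 2 * ⟪u j - x j, v⟫ +
        γ * ∑ i ∈ univ.erase j, w j i * (⟪u j - u i, v⟫ / ‖u j - u i‖) with hD
    have hderiv := hasDerivAt_cluster x w hwsym γ u hu j v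
    refine ⟨D, ?_, ?_⟩
    · have hslope := (hasDerivAt_iff_tendsto_slope.1 hderiv).mono_left
        (nhdsWithin_mono 0 (fun t ht => ne_of_gt ht))
      apply hslope.congr
      intro t
      rw [slope_def_field]
      congr 1
      · congr 2
        simp [Function.update_eq_self]
      · exact sub_zero t
    · -- bound D
      have hFsub : F.erase j ⊆ univ.erase j := fun i hi =>
        mem_erase.2 ⟨(mem_erase.1 hi).1, mem_univ i⟩
      have hsplit : ∑ i ∈ univ.erase j, w j i * (⟪u j - u i, v⟫ / ‖u j - u i‖)
          = ∑ i ∈ univ.erase j \ F.erase j, w j i * (⟪u j - u i, v⟫ / ‖u j - u i‖)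
            + ∑ i ∈ F.erase j, w j i * (⟪u j - u i, v⟫ / ‖u j - u i‖) :=
        (Finset.sum_sdiff hFsub).symm
      have hsumF : ∑ i ∈ F.erase j, w j i * (⟪u j - u i, v⟫ / ‖u j - u i‖) ≤ -((m:ℝ)/2) := by
        have heach : ∀ i ∈ F.erase j, w j i * (⟪u j - u i, v⟫ / ‖u j - u i‖)
            = -⟪‖u i - u j‖⁻¹ • (u i - u j), v⟫ := by
          intro i hi
          obtain ⟨hij, hiF⟩ := mem_erase.1 hi
          rw [hwF j hjF i hiF (Ne.symm hij), one_mul]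
          rw [show u j - u i = -(u i - u j) by abel, inner_neg_left, norm_neg,
            real_inner_smul_left]
          ring
        rw [Finset.sum_congr rfl heach, Finset.sum_neg_distrib]
        linarith [H]
      have hsumOut : ∑ i ∈ univ.erase j \ F.erase j, w j i * (⟪u j - u i, v⟫ / ‖u j - u i‖)
          ≤ ε * n := by
        have heach : ∀ i ∈ univ.erase j \ F.erase j,
            w j i * (⟪u j - u i, v⟫ / ‖u j - u i‖) ≤ ε := by
          intro i hi
          obtain ⟨hi1, hi2⟩ := Finset.mem_sdiff.1 hi
          have hij : i ≠ j := (mem_erase.1 hi1).1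
          have hiF : i ∉ F := fun h => hi2 (mem_erase.2 ⟨hij, h⟩)
          have hne : u j - u i ≠ 0 := sub_ne_zero.2 (hu.ne (Ne.symm hij))
          have hq : ⟪u j - u i, v⟫ / ‖u j - u i‖ ≤ 1 := by
            rw [div_le_one (norm_pos_iff.2 hne)]
            calc ⟪u j - u i, v⟫ ≤ ‖u j - u i‖ * ‖v‖ := real_inner_le_norm _ _
              _ = ‖u j - u i‖ := by rw [hvnorm, mul_one]
          have hwle : w j i ≤ ε := hwout j i (fun h => hiF h.2)
          calc w j i * (⟪u j - u i, v⟫ / ‖u j - u i‖) ≤ w j i * 1 :=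
                mul_le_mul_of_nonneg_left hq (hw0 j i)
            _ = w j i := mul_one _
            _ ≤ ε := hwle
        calc ∑ i ∈ univ.erase j \ F.erase j, w j i * (⟪u j - u i, v⟫ / ‖u j - u i‖)
            ≤ (univ.erase j \ F.erase j).card • ε := Finset.sum_le_card_nsmul _ _ ε heach
          _ = ((univ.erase j \ F.erase j).card : ℝ) * ε := nsmul_eq_mul _ _
          _ ≤ (n : ℝ) * ε := by
              apply mul_le_mul_of_nonneg_right _ hε
              exact_mod_cast Nat.cast_le.2 (le_trans (Finset.card_le_univ _) (by simp))
          _ = ε * n := mul_comm _ _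
      have ht1 : 2 * ⟪u j - x j, v⟫ ≤ 2 * R := by
        have h1 : ⟪u j - x j, v⟫ ≤ ‖u j - x j‖ * ‖v‖ := real_inner_le_norm _ _
        rw [hvnorm, mul_one] at h1
        linarith [hubd j]
      have hsum : ∑ i ∈ univ.erase j, w j i * (⟪u j - u i, v⟫ / ‖u j - u i‖)
          ≤ ε * n - (m:ℝ)/2 := by
        rw [hsplit]; linarith
      have hγsum := mul_le_mul_of_nonneg_left hsum hγ
      rw [hD]
      nlinarith [hγsum, ht1]
  -- choose a diameter pair in F
  have hne2 : ((F ×ˢ F).filter fun q => q.1 ≠ q.2).Nonempty := by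
    obtain ⟨a, ha, b, hb, hab⟩ := Finset.one_lt_card.1 (by omega : 1 < F.card)
    exact ⟨(a, b), Finset.mem_filter.2 ⟨Finset.mem_product.2 ⟨ha, hb⟩, hab⟩⟩
  obtain ⟨q, hqmem, hqmax⟩ := Finset.exists_max_image _ (fun q : Fin n × Fin n => ‖u q.2 - u q.1‖) hne2
  obtain ⟨hqprod, hqne⟩ := Finset.mem_filter.1 hqmem
  obtain ⟨hj0, hk0⟩ := Finset.mem_product.1 hqprod
  set j0 := q.1 with hj0def
  set k0 := q.2 with hk0def
  have hdmax : ∀ a b : Fin n, a ∈ F → b ∈ F → a ≠ b → ‖u b - u a‖ ≤ ‖u k0 - u j0‖ := by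
    intro a b ha hb hab
    exact hqmax (a, b) (Finset.mem_filter.2 ⟨Finset.mem_product.2 ⟨ha, hb⟩, hab⟩)
  -- the two sums
  set A : ℝ := ∑ i ∈ F.erase j0,
    ⟪‖u i - u j0‖⁻¹ • (u i - u j0), ‖u k0 - u j0‖⁻¹ • (u k0 - u j0)⟫ with hA
  set B : ℝ := ∑ i ∈ F.erase k0,
    ⟪‖u i - u k0‖⁻¹ • (u i - u k0), ‖u j0 - u k0‖⁻¹ • (u j0 - u k0)⟫ with hB
  have hAB : (m : ℝ) ≤ A + B := by
    have hk0mem : k0 ∈ F.erase j0 := mem_erase.2 ⟨Ne.symm hqne, hk0⟩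
    have hj0mem : j0 ∈ F.erase k0 := mem_erase.2 ⟨hqne, hj0⟩
    have hAsplit : A = (∑ i ∈ (F.erase j0).erase k0,
        ⟪‖u i - u j0‖⁻¹ • (u i - u j0), ‖u k0 - u j0‖⁻¹ • (u k0 - u j0)⟫) + 1 := by
      rw [hA, ← Finset.sum_erase_add _ _ hk0mem]
      congr 1
      have h1 : ‖(‖u k0 - u j0‖⁻¹ • (u k0 - u j0))‖ = 1 :=
        norm_smul_inv_norm (sub_ne_zero.2 (hu.ne (Ne.symm hqne)))
      rw [real_inner_self_eq_norm_sq, h1, one_pow]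
    have hBsplit : B = (∑ i ∈ (F.erase j0).erase k0,
        ⟪‖u i - u k0‖⁻¹ • (u i - u k0), ‖u j0 - u k0‖⁻¹ • (u j0 - u k0)⟫) + 1 := by
      rw [hB, ← Finset.sum_erase_add _ _ hj0mem, Finset.erase_right_comm]
      congr 1
      have h1 : ‖(‖u j0 - u k0‖⁻¹ • (u j0 - u k0))‖ = 1 :=
        norm_smul_inv_norm (sub_ne_zero.2 (hu.ne hqne))
      rw [real_inner_self_eq_norm_sq, h1, one_pow]
    have hcardn : ((F.erase j0).erase k0).card = m - 2 := by
      rw [Finset.card_erase_of_mem hk0mem, Finset.card_erase_of_mem hj0, hmF]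
      omega
    have hcard : (((F.erase j0).erase k0).card : ℝ) = (m : ℝ) - 2 := by
      rw [hcardn, Nat.cast_sub (by omega)]
      norm_num
    have hterms : ∀ i ∈ (F.erase j0).erase k0,
        (1:ℝ) ≤ ⟪‖u i - u j0‖⁻¹ • (u i - u j0), ‖u k0 - u j0‖⁻¹ • (u k0 - u j0)⟫
          + ⟪‖u i - u k0‖⁻¹ • (u i - u k0), ‖u j0 - u k0‖⁻¹ • (u j0 - u k0)⟫ := by
      intro i hi
      obtain ⟨hik, hi'⟩ := mem_erase.1 hi
      obtain ⟨hij, hiF⟩ := mem_erase.1 hi'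
      exact lemA (u j0) (u k0) (u i) (hu.ne hqne) (hu.ne (Ne.symm hij)) (hu.ne (Ne.symm hik))
        (hdmax j0 i hj0 hiF (Ne.symm hij)) (hdmax k0 i hk0 hiF (Ne.symm hik))
    have hsum : ((m : ℝ) - 2) ≤ ∑ i ∈ (F.erase j0).erase k0,
        (⟪‖u i - u j0‖⁻¹ • (u i - u j0), ‖u k0 - u j0‖⁻¹ • (u k0 - u j0)⟫
          + ⟪‖u i - u k0‖⁻¹ • (u i - u k0), ‖u j0 - u k0‖⁻¹ • (u j0 - u k0)⟫) := by
      calc (m : ℝ) - 2 = (((F.erase j0).erase k0).card : ℝ) * 1 := by rw [hcard, mul_one]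
        _ ≤ _ := by
            rw [← nsmul_eq_mul]
            exact Finset.card_nsmul_le_sum _ _ _ hterms
    rw [hAsplit, hBsplit, Finset.sum_add_distrib] at *
    linarith [hsum]
  rcases le_total ((m:ℝ)/2) A with h | h
  · exact key j0 k0 hj0 hqne h
  · exact key k0 j0 hk0 (Ne.symm hqne) (by rw [hB] at *; linarith)
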